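/- arXiv:2512.11217 — 2 statements merged into one kernel-verified Lean document; each statement's English description precedes it below -/
import Mathlib

section
/- For G-valued random variables X and Y with H(X) and H(Y) finite, |H(X) - H(Y)| <= 2 d[X;Y], where d[X;Y] = H(X' - Y') - H(X)/2 - H(Y)/2 with X', Y' independent copies of X, Y. -/
open scoped BigOperators Pointwise
noncomputable section

/-- A finitely supported probability mass function. -/
def IsPMF {α : Type*} (p : α → ℝ) : Prop :=
  (∀ x, 0 ≤ p x) ∧ (Function.support p).Finite ∧ ∑ᶠ x, p x = 1

/-- Shannon entropy of a pmf. -/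
def ent {α : Type*} (p : α → ℝ) : ℝ := ∑ᶠ x, -(p x * Real.log (p x))

/-- Convolution of pmfs: the distribution of the sum of independent random variables. -/
def conv {G : Type*} [AddCommGroup G] (p q : G → ℝ) : G → ℝ :=
  fun z => ∑ᶠ x, p x * q (z - x)

/-- Distribution of the negation. -/
def negp {G : Type*} [AddCommGroup G] (p : G → ℝ) : G → ℝ := fun x => p (-x)

/-- Entropic Ruzsa distance between (the distributions of) two random variables. -/
def rdist {G : Type*} [AddCommGroup G] (p q : G → ℝ) : ℝ :=
  ent (conv p (negp q)) - ent p / 2 - ent q / 2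

/-- Distribution of the sum of `n` iid copies. -/
def iterConv {G : Type*} [AddCommGroup G] (p : G → ℝ) : ℕ → G → ℝ
  | 0 => fun x => Set.indicator ({0} : Set G) (fun _ => (1 : ℝ)) x
  | n + 1 => conv (iterConv p n) p

open Real Function

lemma ent_eq_finsum_negMulLog {α : Type*} (p : α → ℝ) :
    ent p = ∑ᶠ x, Real.negMulLog (p x) := by
  unfold ent
  congr 1
  funext x
  rw [Real.negMulLog, neg_mul]

lemma support_negMulLog_subset {α : Type*} (p : α → ℝ) :
    Function.support (fun x => Real.negMulLog (p x)) ⊆ Function.support p := by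
  intro x hx
  simp only [Function.mem_support] at hx ⊢
  intro h
  simp [h, Real.negMulLog] at hx

/-- conv is commutative. -/
lemma conv_comm {G : Type*} [AddCommGroup G] (p q : G → ℝ) : conv p q = conv q p := by
  funext z
  unfold conv
  rw [← finsum_comp_equiv (Equiv.subLeft z) (f := fun x => q x * p (z - x))]
  congr 1
  funext x
  simp [Equiv.subLeft, sub_sub_cancel, mul_comm]

/-- negation preserves PMF-ness -/
lemma isPMF_negp {G : Type*} [AddCommGroup G] (q : G → ℝ) (hq : IsPMF q) : IsPMF (negp q) := by
  obtain ⟨h0, hfin, hsum⟩ := hq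
  refine ⟨fun x => h0 _, ?_, ?_⟩
  · have : Function.support (negp q) = Neg.neg ⁻¹' (Function.support q) := by
      ext x; simp [negp]
    rw [this]
    exact hfin.preimage (neg_injective.injOn)
  · rw [← hsum, ← finsum_comp_equiv (Equiv.neg G) (f := q)]
    rfl

lemma ent_negp {G : Type*} [AddCommGroup G] (q : G → ℝ) : ent (negp q) = ent q := by
  unfold ent negp
  exact finsum_comp_equiv (Equiv.neg G) (f := fun x => -(q x * Real.log (q x)))

lemma ent_conv_ge {G : Type*} [AddCommGroup G] [DecidableEq G] (p q : G → ℝ)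
    (hp : IsPMF p) (hq : IsPMF q) : ent p ≤ ent (conv p q) := by
  obtain ⟨hp0, hpfin, hpsum⟩ := hp
  obtain ⟨hq0, hqfin, hqsum⟩ := hq
  set S : Finset G := hpfin.toFinset with hS
  set T : Finset G := hqfin.toFinset with hT
  set U : Finset G := S + T with hU
  have hSsupp : Function.support p ⊆ ↑S := by simp [hS]
  have hTsupp : Function.support q ⊆ ↑T := by simp [hT]
  -- rewrite conv as sum over T
  have hconv : ∀ z, conv p q z = ∑ y ∈ T, q y * p (z - y) := by
    intro z
    unfold conv
    rw [← finsum_comp_equiv (Equiv.subLeft z) (f := fun x => p x * q (z - x))]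
    have : (fun y => (fun x => p x * q (z - x)) (Equiv.subLeft z y))
        = fun y => q y * p (z - y) := by
      funext y
      simp [Equiv.subLeft, sub_sub_cancel, mul_comm]
    rw [this]
    apply finsum_eq_sum_of_support_subset
    intro y hy
    apply hTsupp
    intro h
    simp [h] at hy
  have hqT : ∑ y ∈ T, q y = 1 := by
    rw [← finsum_eq_sum_of_support_subset q hTsupp, hqsum]
  -- support of negMulLog ∘ conv p q ⊆ U
  have hU' : Function.support (fun z => Real.negMulLog (conv p q z)) ⊆ ↑U := by
    intro z hz
    have hz' : conv p q z ≠ 0 := by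
      intro h
      simp [Function.mem_support, h, Real.negMulLog] at hz
    rw [hconv z] at hz'
    obtain ⟨y, hyT, hyne⟩ := Finset.exists_ne_zero_of_sum_ne_zero hz'
    have hpz : p (z - y) ≠ 0 := fun h => hyne (by simp [h])
    have hzS : z - y ∈ S := hSsupp hpz
    have : z = (z - y) + y := by abel
    rw [this]
    exact Finset.add_mem_add hzS hyT
  -- entropy of p as sum over S
  have hentp : ent p = ∑ x ∈ S, Real.negMulLog (p x) := by
    rw [ent_eq_finsum_negMulLog]
    exact finsum_eq_sum_of_support_subset _
      ((support_negMulLog_subset p).trans hSsupp)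
  -- entropy of conv as sum over U
  have hentc : ent (conv p q) = ∑ z ∈ U, Real.negMulLog (conv p q z) := by
    rw [ent_eq_finsum_negMulLog]
    exact finsum_eq_sum_of_support_subset _ hU'
  rw [hentc]
  -- Jensen at each z
  have jensen : ∀ z ∈ U, ∑ y ∈ T, q y * Real.negMulLog (p (z - y))
      ≤ Real.negMulLog (conv p q z) := by
    intro z _
    rw [hconv z]
    have := Real.concaveOn_negMulLog.le_map_sum (t := T) (w := q)
      (p := fun y => p (z - y)) (fun y _ => hq0 y) hqT (fun y _ => hp0 (z - y))
    simpa using this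
  calc ent p = ∑ y ∈ T, q y * ent p := by
        rw [← Finset.sum_mul, hqT, one_mul]
    _ = ∑ y ∈ T, q y * ∑ z ∈ U, Real.negMulLog (p (z - y)) := by
        apply Finset.sum_congr rfl
        intro y hy
        congr 1
        rw [hentp]
        rw [← finsum_eq_sum_of_support_subset (fun z => Real.negMulLog (p (z - y)))
          (s := U)]
        · have h1 : ∑ᶠ z : G, Real.negMulLog (p (z - y)) = ∑ᶠ x, Real.negMulLog (p x) := by
            have := finsum_comp_equiv (Equiv.subRight y) (f := fun x => Real.negMulLog (p x))
            simpa using this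
          rw [h1]
          exact (finsum_eq_sum_of_support_subset _
            ((support_negMulLog_subset p).trans hSsupp)).symm
        · intro z hz
          have hpz : p (z - y) ≠ 0 := by
            intro h
            simp [Function.mem_support, h, Real.negMulLog] at hz
          have hzS : z - y ∈ S := hSsupp hpz
          have : z = (z - y) + y := by abel
          rw [this]
          exact Finset.add_mem_add hzS hy
    _ = ∑ z ∈ U, ∑ y ∈ T, q y * Real.negMulLog (p (z - y)) := by
        rw [Finset.sum_comm]
        simp_rw [Finset.mul_sum]
    _ ≤ ∑ z ∈ U, Real.negMulLog (conv p q z) := Finset.sum_le_sum jensen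

/-- `|H(X) - H(Y)| ≤ 2 d[X;Y]`. -/
theorem abs_entropy_diff_le_two_rdist {G : Type*} [AddCommGroup G] (p q : G → ℝ)
    (hp : IsPMF p) (hq : IsPMF q) :
    |ent p - ent q| ≤ 2 * rdist p q := by
  classical
  have hnq : IsPMF (negp q) := isPMF_negp q hq
  have h1 : ent p ≤ ent (conv p (negp q)) := ent_conv_ge p (negp q) hp hnq
  have h2 : ent q ≤ ent (conv p (negp q)) := by
    rw [conv_comm]
    calc ent q = ent (negp q) := (ent_negp q).symm
      _ ≤ ent (conv (negp q) p) := ent_conv_ge (negp q) p hnq hp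
  rw [abs_le]
  unfold rdist
  constructor <;> linarith
end
end

section
/- If X, Y, Z are independent G-valued finitely supported random variables, then H(X+Y+Z) - H(X+Y) <= H(Y+Z) - H(Y) (Kaimanovich–Vershik / Madiman submodularity inequality). -/
open scoped BigOperators Pointwise
noncomputable section

/-- Gibbs' inequality / log-sum inequality. -/
lemma my_gibbs {ι : Type*} (S : Finset ι) (f g : ι → ℝ) (hf : ∀ i ∈ S, 0 ≤ f i)
    (hg : ∀ i ∈ S, 0 ≤ g i) (hfg : ∀ i ∈ S, 0 < f i → 0 < g i)
    (hsum : ∑ i ∈ S, g i ≤ ∑ i ∈ S, f i) :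
    0 ≤ ∑ i ∈ S, f i * Real.log (f i / g i) := by
  have key : ∑ i ∈ S, f i * Real.log (g i / f i) ≤ ∑ i ∈ S, (g i - f i) := by
    apply Finset.sum_le_sum
    intro i hi
    rcases eq_or_lt_of_le (hf i hi) with h | h
    · simp [← h, hg i hi]
    · have hgi := hfg i hi h
      calc f i * Real.log (g i / f i) ≤ f i * (g i / f i - 1) :=
            mul_le_mul_of_nonneg_left (Real.log_le_sub_one_of_pos (div_pos hgi h)) h.le
        _ = g i - f i := by field_simp
  have flip : ∀ i ∈ S, f i * Real.log (f i / g i) = -(f i * Real.log (g i / f i)) := by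
    intro i hi
    rcases eq_or_lt_of_le (hf i hi) with h | h
    · simp [← h]
    · have hgi := hfg i hi h
      rw [Real.log_div h.ne' hgi.ne', Real.log_div hgi.ne' h.ne']
      ring
  rw [Finset.sum_congr rfl flip, Finset.sum_neg_distrib]
  have h2 : ∑ i ∈ S, (g i - f i) ≤ 0 := by
    rw [Finset.sum_sub_distrib]; linarith
  linarith [key.trans h2]

/-- Kaimanovich–Vershik / Madiman: for independent `X, Y, Z`,
`H(X+Y+Z) - H(X+Y) ≤ H(Y+Z) - H(Y)`; stated at the level of distributions via convolution. -/
theorem entropy_submodularity {G : Type*} [AddCommGroup G] (p q r : G → ℝ)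
    (hp : IsPMF p) (hq : IsPMF q) (hr : IsPMF r) :
    ent (conv (conv p q) r) - ent (conv p q) ≤ ent (conv q r) - ent q := by
  classical
  obtain ⟨p0, pfin, p1⟩ := hp
  obtain ⟨q0, qfin, q1⟩ := hq
  obtain ⟨r0, rfin, r1⟩ := hr
  set A := pfin.toFinset with hA
  set B := qfin.toFinset with hB
  set C := rfin.toFinset with hC
  set D := A + B with hD
  set E := D + C with hE
  have mA : ∀ x : G, p x ≠ 0 → x ∈ A := fun x hx => pfin.mem_toFinset.2 hx
  have mB : ∀ x : G, q x ≠ 0 → x ∈ B := fun x hx => qfin.mem_toFinset.2 hx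
  have mC : ∀ x : G, r x ≠ 0 → x ∈ C := fun x hx => rfin.mem_toFinset.2 hx
  -- finsum-to-Finset.sum conversion
  have key : ∀ (f : G → ℝ) (T : Finset G), (∀ z, f z ≠ 0 → z ∈ T) →
      ∑ᶠ z, f z = ∑ z ∈ T, f z := by
    intro f T h
    exact finsum_eq_sum_of_support_subset f (fun z hz => Finset.mem_coe.2 (h z hz))
  have conv_eq : ∀ (f g : G → ℝ) (T : Finset G), (∀ z, f z ≠ 0 → z ∈ T) →
      ∀ z, conv f g z = ∑ x ∈ T, f x * g (z - x) := by
    intro f g T h z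
    exact key _ T (fun x hx => h x (fun h0 => hx (by simp [h0])))
  set s := conv p q with hs
  set t := conv q r with ht
  set u := conv s r with hu
  have s_eq : ∀ z, s z = ∑ x ∈ A, p x * q (z - x) := conv_eq p q A mA
  have t_eq : ∀ z, t z = ∑ y ∈ B, q y * r (z - y) := conv_eq q r B mB
  have s0 : ∀ z, 0 ≤ s z := fun z => by
    rw [s_eq]; exact Finset.sum_nonneg fun x _ => mul_nonneg (p0 x) (q0 _)
  have t0 : ∀ z, 0 ≤ t z := fun z => by
    rw [t_eq]; exact Finset.sum_nonneg fun x _ => mul_nonneg (q0 x) (r0 _)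
  have mD : ∀ z, s z ≠ 0 → z ∈ D := by
    intro z hz
    rw [s_eq] at hz
    obtain ⟨x, hxA, hx⟩ := Finset.exists_ne_zero_of_sum_ne_zero hz
    have h2 : z - x ∈ B := mB _ (fun h0 => hx (by simp [h0]))
    have h3 := Finset.add_mem_add hxA h2
    rw [hD]; simpa using h3
  have u_eq : ∀ z, u z = ∑ a ∈ D, s a * r (z - a) := conv_eq s r D mD
  have u0 : ∀ z, 0 ≤ u z := fun z => by
    rw [u_eq]; exact Finset.sum_nonneg fun a _ => mul_nonneg (s0 a) (r0 _)
  have mBC : ∀ z, t z ≠ 0 → z ∈ B + C := by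
    intro z hz
    rw [t_eq] at hz
    obtain ⟨y, hyB, hy⟩ := Finset.exists_ne_zero_of_sum_ne_zero hz
    have h2 : z - y ∈ C := mC _ (fun h0 => hy (by simp [h0]))
    simpa using Finset.add_mem_add hyB h2
  have mE : ∀ z, u z ≠ 0 → z ∈ E := by
    intro z hz
    rw [u_eq] at hz
    obtain ⟨a, haD, ha⟩ := Finset.exists_ne_zero_of_sum_ne_zero hz
    have h2 : z - a ∈ C := mC _ (fun h0 => ha (by simp [h0]))
    have h3 := Finset.add_mem_add haD h2
    rw [hE]; simpa using h3
  -- shift lemma for sums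
  have shift : ∀ (g : G → ℝ) (x : G) (T : Finset G), (∀ a, g (a - x) ≠ 0 → a ∈ T) →
      ∑ a ∈ T, g (a - x) = ∑ᶠ y, g y := by
    intro g x T h
    rw [← key (fun a => g (a - x)) T h]
    exact finsum_comp_equiv (Equiv.subRight x)
  have pA1 : ∑ x ∈ A, p x = 1 := by rw [← key p A mA]; exact p1
  have r_shift : ∀ a ∈ D, ∑ b ∈ E, r (b - a) = 1 := by
    intro a ha
    have h : ∀ b : G, r (b - a) ≠ 0 → b ∈ E := by
      intro b hb
      have h3 := Finset.add_mem_add ha (mC _ hb)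
      rw [hE]; simpa using h3
    rw [shift r a E h]
    exact r1
  have memD : ∀ x ∈ A, ∀ a : G, q (a - x) ≠ 0 → a ∈ D := by
    intro x hx a ha
    have h3 := Finset.add_mem_add hx (mB _ ha)
    rw [hD]; simpa using h3
  have m_qr : ∀ x ∈ A, ∀ b : G, ∑ a ∈ D, q (a - x) * r (b - a) = t (b - x) := by
    intro x hx b
    have h1 : ∀ a : G, q (a - x) * r (b - x - (a - x)) ≠ 0 → a ∈ D := by
      intro a ha
      exact memD x hx a (fun h0 => ha (by simp [h0]))
    have h2 := shift (fun y => q y * r (b - x - y)) x D h1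
    calc ∑ a ∈ D, q (a - x) * r (b - a)
        = ∑ a ∈ D, q (a - x) * r (b - x - (a - x)) :=
          Finset.sum_congr rfl (fun a _ => by rw [sub_sub_sub_cancel_right])
      _ = ∑ᶠ y, q y * r (b - x - y) := h2
      _ = t (b - x) := rfl
  have m_pt : ∀ b : G, ∑ x ∈ A, p x * t (b - x) = u b := by
    intro b
    calc ∑ x ∈ A, p x * t (b - x)
        = ∑ x ∈ A, p x * ∑ a ∈ D, q (a - x) * r (b - a) :=
          Finset.sum_congr rfl (fun x hx => by rw [m_qr x hx b])
      _ = ∑ x ∈ A, ∑ a ∈ D, p x * q (a - x) * r (b - a) :=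
          Finset.sum_congr rfl (fun x _ => by
            rw [Finset.mul_sum]; exact Finset.sum_congr rfl (fun a _ => by ring))
      _ = ∑ a ∈ D, ∑ x ∈ A, p x * q (a - x) * r (b - a) := Finset.sum_comm
      _ = ∑ a ∈ D, (∑ x ∈ A, p x * q (a - x)) * r (b - a) :=
          Finset.sum_congr rfl (fun a _ => by rw [Finset.sum_mul])
      _ = ∑ a ∈ D, s a * r (b - a) :=
          Finset.sum_congr rfl (fun a _ => by rw [← s_eq])
      _ = u b := (u_eq b).symm
  have hmarg : ∀ b : G, ∑ x ∈ A, ∑ a ∈ D, p x * q (a - x) * r (b - a) = u b := by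
    intro b
    rw [Finset.sum_comm]
    calc ∑ a ∈ D, ∑ x ∈ A, p x * q (a - x) * r (b - a)
        = ∑ a ∈ D, (∑ x ∈ A, p x * q (a - x)) * r (b - a) :=
          Finset.sum_congr rfl (fun a _ => by rw [Finset.sum_mul])
      _ = ∑ a ∈ D, s a * r (b - a) :=
          Finset.sum_congr rfl (fun a _ => by rw [← s_eq])
      _ = u b := (u_eq b).symm
  -- entropies as Finset sums
  have ent_eq : ∀ (f : G → ℝ) (T : Finset G), (∀ z, f z ≠ 0 → z ∈ T) →
      ent f = -∑ z ∈ T, f z * Real.log (f z) := by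
    intro f T h
    rw [ent, key (fun z => -(f z * Real.log (f z))) T
      (fun z hz => h z (fun h0 => hz (by simp [h0]))), Finset.sum_neg_distrib]
  have entq : ent q = -∑ y ∈ B, q y * Real.log (q y) := ent_eq q B mB
  have ents : ent s = -∑ a ∈ D, s a * Real.log (s a) := ent_eq s D mD
  have entt : ent t = -∑ c ∈ B + C, t c * Real.log (t c) := ent_eq t (B + C) mBC
  have entu : ent u = -∑ b ∈ E, u b * Real.log (u b) := ent_eq u E mE
  -- the four marginalized triple sums
  have hT1 : ∑ x ∈ A, ∑ a ∈ D, ∑ b ∈ E, p x * q (a - x) * r (b - a) * Real.log (q (a - x))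
      = ∑ y ∈ B, q y * Real.log (q y) := by
    have inner : ∀ x ∈ A, ∀ a ∈ D,
        ∑ b ∈ E, p x * q (a - x) * r (b - a) * Real.log (q (a - x))
        = p x * (q (a - x) * Real.log (q (a - x))) := by
      intro x hx a ha
      calc ∑ b ∈ E, p x * q (a - x) * r (b - a) * Real.log (q (a - x))
          = p x * (q (a - x) * Real.log (q (a - x))) * ∑ b ∈ E, r (b - a) := by
            rw [Finset.mul_sum]; exact Finset.sum_congr rfl (fun b _ => by ring)
        _ = p x * (q (a - x) * Real.log (q (a - x))) := by rw [r_shift a ha, mul_one]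
    have qlog_shift : ∀ x ∈ A,
        ∑ a ∈ D, q (a - x) * Real.log (q (a - x)) = ∑ y ∈ B, q y * Real.log (q y) := by
      intro x hx
      have h1 : ∀ a : G, q (a - x) * Real.log (q (a - x)) ≠ 0 → a ∈ D := by
        intro a ha
        exact memD x hx a (fun h0 => ha (by simp [h0]))
      rw [shift (fun y => q y * Real.log (q y)) x D h1,
        key (fun y => q y * Real.log (q y)) B (fun y hy => mB y (fun h0 => hy (by simp [h0])))]
    calc ∑ x ∈ A, ∑ a ∈ D, ∑ b ∈ E, p x * q (a - x) * r (b - a) * Real.log (q (a - x))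
        = ∑ x ∈ A, ∑ a ∈ D, p x * (q (a - x) * Real.log (q (a - x))) :=
          Finset.sum_congr rfl (fun x hx => Finset.sum_congr rfl (fun a ha => inner x hx a ha))
      _ = ∑ x ∈ A, p x * ∑ a ∈ D, q (a - x) * Real.log (q (a - x)) :=
          Finset.sum_congr rfl (fun x _ => by rw [Finset.mul_sum])
      _ = ∑ x ∈ A, p x * ∑ y ∈ B, q y * Real.log (q y) :=
          Finset.sum_congr rfl (fun x hx => by rw [qlog_shift x hx])
      _ = (∑ x ∈ A, p x) * ∑ y ∈ B, q y * Real.log (q y) := by rw [Finset.sum_mul]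
      _ = ∑ y ∈ B, q y * Real.log (q y) := by rw [pA1, one_mul]
  have hT3 : ∑ x ∈ A, ∑ a ∈ D, ∑ b ∈ E, p x * q (a - x) * r (b - a) * Real.log (s a)
      = ∑ a ∈ D, s a * Real.log (s a) := by
    have inner : ∀ x ∈ A, ∀ a ∈ D,
        ∑ b ∈ E, p x * q (a - x) * r (b - a) * Real.log (s a)
        = p x * q (a - x) * Real.log (s a) := by
      intro x hx a ha
      calc ∑ b ∈ E, p x * q (a - x) * r (b - a) * Real.log (s a)
          = p x * q (a - x) * Real.log (s a) * ∑ b ∈ E, r (b - a) := by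
            rw [Finset.mul_sum]; exact Finset.sum_congr rfl (fun b _ => by ring)
        _ = p x * q (a - x) * Real.log (s a) := by rw [r_shift a ha, mul_one]
    calc ∑ x ∈ A, ∑ a ∈ D, ∑ b ∈ E, p x * q (a - x) * r (b - a) * Real.log (s a)
        = ∑ x ∈ A, ∑ a ∈ D, p x * q (a - x) * Real.log (s a) :=
          Finset.sum_congr rfl (fun x hx => Finset.sum_congr rfl (fun a ha => inner x hx a ha))
      _ = ∑ a ∈ D, ∑ x ∈ A, p x * q (a - x) * Real.log (s a) := Finset.sum_comm
      _ = ∑ a ∈ D, (∑ x ∈ A, p x * q (a - x)) * Real.log (s a) :=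
          Finset.sum_congr rfl (fun a _ => by rw [Finset.sum_mul])
      _ = ∑ a ∈ D, s a * Real.log (s a) :=
          Finset.sum_congr rfl (fun a _ => by rw [← s_eq])
  have tri : ∀ F : G → G → G → ℝ,
      ∑ x ∈ A, ∑ a ∈ D, ∑ b ∈ E, F x a b = ∑ b ∈ E, ∑ x ∈ A, ∑ a ∈ D, F x a b := by
    intro F
    rw [show (∑ x ∈ A, ∑ a ∈ D, ∑ b ∈ E, F x a b)
        = ∑ x ∈ A, ∑ b ∈ E, ∑ a ∈ D, F x a b from
      Finset.sum_congr rfl (fun x _ => Finset.sum_comm)]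
    exact Finset.sum_comm
  have hT2 : ∑ x ∈ A, ∑ a ∈ D, ∑ b ∈ E, p x * q (a - x) * r (b - a) * Real.log (u b)
      = ∑ b ∈ E, u b * Real.log (u b) := by
    rw [tri]
    refine Finset.sum_congr rfl (fun b _ => ?_)
    calc ∑ x ∈ A, ∑ a ∈ D, p x * q (a - x) * r (b - a) * Real.log (u b)
        = (∑ x ∈ A, ∑ a ∈ D, p x * q (a - x) * r (b - a)) * Real.log (u b) := by
          rw [Finset.sum_mul]
          exact Finset.sum_congr rfl (fun x _ => by rw [Finset.sum_mul])
      _ = u b * Real.log (u b) := by rw [hmarg b]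
  have hT4 : ∑ x ∈ A, ∑ a ∈ D, ∑ b ∈ E, p x * q (a - x) * r (b - a) * Real.log (t (b - x))
      = ∑ c ∈ B + C, t c * Real.log (t c) := by
    have inner : ∀ x ∈ A,
        ∑ a ∈ D, ∑ b ∈ E, p x * q (a - x) * r (b - a) * Real.log (t (b - x))
        = p x * ∑ c ∈ B + C, t c * Real.log (t c) := by
      intro x hx
      have memE' : ∀ b : G, t (b - x) * Real.log (t (b - x)) ≠ 0 → b ∈ E := by
        intro b hb
        have h2 : b - x ∈ B + C := mBC _ (fun h0 => hb (by simp [h0]))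
        have h3 := Finset.add_mem_add hx h2
        rw [hE, hD, add_assoc]; simpa using h3
      have tlog_shift : ∑ b ∈ E, t (b - x) * Real.log (t (b - x))
          = ∑ c ∈ B + C, t c * Real.log (t c) := by
        rw [shift (fun c => t c * Real.log (t c)) x E memE',
          key (fun c => t c * Real.log (t c)) (B + C)
            (fun c hc => mBC c (fun h0 => hc (by simp [h0])))]
      calc ∑ a ∈ D, ∑ b ∈ E, p x * q (a - x) * r (b - a) * Real.log (t (b - x))
          = ∑ b ∈ E, ∑ a ∈ D, p x * q (a - x) * r (b - a) * Real.log (t (b - x)) :=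
            Finset.sum_comm
        _ = ∑ b ∈ E, p x * Real.log (t (b - x)) * ∑ a ∈ D, q (a - x) * r (b - a) :=
            Finset.sum_congr rfl (fun b _ => by
              rw [Finset.mul_sum]; exact Finset.sum_congr rfl (fun a _ => by ring))
        _ = ∑ b ∈ E, p x * (t (b - x) * Real.log (t (b - x))) :=
            Finset.sum_congr rfl (fun b _ => by rw [m_qr x hx b]; ring)
        _ = p x * ∑ b ∈ E, t (b - x) * Real.log (t (b - x)) := by rw [Finset.mul_sum]
        _ = p x * ∑ c ∈ B + C, t c * Real.log (t c) := by rw [tlog_shift]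
    calc ∑ x ∈ A, ∑ a ∈ D, ∑ b ∈ E, p x * q (a - x) * r (b - a) * Real.log (t (b - x))
        = ∑ x ∈ A, p x * ∑ c ∈ B + C, t c * Real.log (t c) :=
          Finset.sum_congr rfl (fun x hx => inner x hx)
      _ = (∑ x ∈ A, p x) * ∑ c ∈ B + C, t c * Real.log (t c) := by rw [Finset.sum_mul]
      _ = ∑ c ∈ B + C, t c * Real.log (t c) := by rw [pA1, one_mul]
  -- positivity of the big sum
  have hpos : 0 ≤ ∑ x ∈ A, ∑ a ∈ D, ∑ b ∈ E, p x * q (a - x) * r (b - a) *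
      (Real.log (q (a - x)) + Real.log (u b) - Real.log (s a) - Real.log (t (b - x))) := by
    rw [tri]
    apply Finset.sum_nonneg
    intro b _
    by_cases hub : u b = 0
    · have h1 : ∑ x ∈ A, ∑ a ∈ D, p x * q (a - x) * r (b - a) = 0 := by
        rw [hmarg b, hub]
      have hz : ∀ x ∈ A, ∀ a ∈ D, p x * q (a - x) * r (b - a) = 0 := by
        intro x hx a ha
        have h2 := (Finset.sum_eq_zero_iff_of_nonneg (fun x _ => Finset.sum_nonneg
          (fun a _ => mul_nonneg (mul_nonneg (p0 _) (q0 _)) (r0 _)))).1 h1 x hx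
        exact (Finset.sum_eq_zero_iff_of_nonneg
          (fun a _ => mul_nonneg (mul_nonneg (p0 _) (q0 _)) (r0 _))).1 h2 a ha
      apply le_of_eq
      symm
      apply Finset.sum_eq_zero
      intro x hx
      apply Finset.sum_eq_zero
      intro a ha
      rw [hz x hx a ha, zero_mul]
    · have hub' : 0 < u b := lt_of_le_of_ne (u0 b) (Ne.symm hub)
      set f : G × G → ℝ := fun z => p z.1 * q (z.2 - z.1) * r (b - z.2) with hf_def
      set g : G × G → ℝ :=
        fun z => p z.1 * t (b - z.1) * (s z.2 * r (b - z.2)) / u b with hg_def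
      have extract : ∀ z ∈ A ×ˢ D, 0 < f z →
          0 < p z.1 ∧ 0 < q (z.2 - z.1) ∧ 0 < r (b - z.2) ∧ 0 < s z.2 ∧ 0 < t (b - z.1) := by
        intro z hz hfz
        obtain ⟨hx, ha⟩ := Finset.mem_product.1 hz
        have hpx : 0 < p z.1 := by
          rcases eq_or_lt_of_le (p0 z.1) with h | h
          · exfalso; rw [hf_def] at hfz; simp [← h] at hfz
          · exact h
        have hqx : 0 < q (z.2 - z.1) := by
          rcases eq_or_lt_of_le (q0 (z.2 - z.1)) with h | h
          · exfalso; rw [hf_def] at hfz; simp [← h] at hfz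
          · exact h
        have hrx : 0 < r (b - z.2) := by
          rcases eq_or_lt_of_le (r0 (b - z.2)) with h | h
          · exfalso; rw [hf_def] at hfz; simp [← h] at hfz
          · exact h
        have hsx : 0 < s z.2 := by
          have hle : p z.1 * q (z.2 - z.1) ≤ s z.2 := by
            rw [s_eq]
            exact Finset.single_le_sum (fun i _ => mul_nonneg (p0 i) (q0 _)) hx
          exact lt_of_lt_of_le (mul_pos hpx hqx) hle
        have htx : 0 < t (b - z.1) := by
          have hyB : z.2 - z.1 ∈ B := mB _ hqx.ne'
          have hle : q (z.2 - z.1) * r (b - z.1 - (z.2 - z.1)) ≤ t (b - z.1) := by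
            rw [t_eq]
            exact Finset.single_le_sum (fun i _ => mul_nonneg (q0 i) (r0 _)) hyB
          rw [sub_sub_sub_cancel_right] at hle
          exact lt_of_lt_of_le (mul_pos hqx hrx) hle
        exact ⟨hpx, hqx, hrx, hsx, htx⟩
      have hf0 : ∀ z ∈ A ×ˢ D, 0 ≤ f z :=
        fun z _ => mul_nonneg (mul_nonneg (p0 _) (q0 _)) (r0 _)
      have hg0 : ∀ z ∈ A ×ˢ D, 0 ≤ g z := fun z _ =>
        div_nonneg (mul_nonneg (mul_nonneg (p0 _) (t0 _)) (mul_nonneg (s0 _) (r0 _))) (u0 b)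
      have hfg : ∀ z ∈ A ×ˢ D, 0 < f z → 0 < g z := by
        intro z hz hfz
        obtain ⟨hpx, hqx, hrx, hsx, htx⟩ := extract z hz hfz
        exact div_pos (mul_pos (mul_pos hpx htx) (mul_pos hsx hrx)) hub'
      have hsum : ∑ z ∈ A ×ˢ D, g z ≤ ∑ z ∈ A ×ˢ D, f z := by
        apply le_of_eq
        rw [Finset.sum_product, Finset.sum_product]
        have hgsum : ∑ x ∈ A, ∑ a ∈ D, g (x, a) = u b := by
          calc ∑ x ∈ A, ∑ a ∈ D, p x * t (b - x) * (s a * r (b - a)) / u b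
              = ∑ x ∈ A, (p x * t (b - x) / u b) * ∑ a ∈ D, s a * r (b - a) :=
                Finset.sum_congr rfl (fun x _ => by
                  rw [Finset.mul_sum]; exact Finset.sum_congr rfl (fun a _ => by ring))
            _ = ∑ x ∈ A, (p x * t (b - x) / u b) * u b :=
                Finset.sum_congr rfl (fun x _ => by rw [← u_eq])
            _ = ∑ x ∈ A, p x * t (b - x) :=
                Finset.sum_congr rfl (fun x _ => div_mul_cancel₀ _ hub)
            _ = u b := m_pt b
        rw [hgsum]
        exact (hmarg b).symm
      have hg := my_gibbs (A ×ˢ D) f g hf0 hg0 hfg hsum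
      have hrw : ∑ z ∈ A ×ˢ D, f z * Real.log (f z / g z)
          = ∑ x ∈ A, ∑ a ∈ D, p x * q (a - x) * r (b - a) *
            (Real.log (q (a - x)) + Real.log (u b) - Real.log (s a) - Real.log (t (b - x))) := by
        rw [Finset.sum_product]
        refine Finset.sum_congr rfl (fun x hx => Finset.sum_congr rfl (fun a ha => ?_))
        have hz : (x, a) ∈ A ×ˢ D := Finset.mem_product.2 ⟨hx, ha⟩
        rcases eq_or_lt_of_le (hf0 (x, a) hz) with h | h
        · have h' : p x * q (a - x) * r (b - a) = 0 := h.symm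
          simp only [hf_def, hg_def]
          rw [h']
          ring
        · obtain ⟨hpx, hqx, hrx, hsx, htx⟩ := extract (x, a) hz h
          have hquot : f (x, a) / g (x, a) = q (a - x) * u b / (s a * t (b - x)) := by
            simp only [hf_def, hg_def]
            field_simp
          rw [hquot, Real.log_div (mul_ne_zero hqx.ne' hub'.ne')
              (mul_ne_zero hsx.ne' htx.ne'),
            Real.log_mul hqx.ne' hub'.ne', Real.log_mul hsx.ne' htx.ne']
          simp only [hf_def]
          ring
      rw [← hrw]
      exact hg
  -- put everything together
  have hsplit : ∑ x ∈ A, ∑ a ∈ D, ∑ b ∈ E, p x * q (a - x) * r (b - a) *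
      (Real.log (q (a - x)) + Real.log (u b) - Real.log (s a) - Real.log (t (b - x)))
      = (∑ x ∈ A, ∑ a ∈ D, ∑ b ∈ E, p x * q (a - x) * r (b - a) * Real.log (q (a - x)))
      + (∑ x ∈ A, ∑ a ∈ D, ∑ b ∈ E, p x * q (a - x) * r (b - a) * Real.log (u b))
      - (∑ x ∈ A, ∑ a ∈ D, ∑ b ∈ E, p x * q (a - x) * r (b - a) * Real.log (s a))
      - (∑ x ∈ A, ∑ a ∈ D, ∑ b ∈ E, p x * q (a - x) * r (b - a) * Real.log (t (b - x))) := by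
    simp only [mul_add, mul_sub, Finset.sum_add_distrib, Finset.sum_sub_distrib]
  rw [hsplit, hT1, hT2, hT3, hT4] at hpos
  linarith [hpos, entq, ents, entt, entu]
end
end
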